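/- Fix reals a > b > 0, w0 > 0, w1 > 0 and λ > 0 with w1·(a − b) > w0·a. Define u0(x) = (w0/(2·ln 2)) · a/(1 + a·x) − λ and u1(x) = (w1/(2·ln 2)) · (a/(1 + a·x) − b/(1 + b·x)) − λ, and set ζ = (w1/w0)·(1/b − 1/a) − 1/b (so ζ > 0). Then u1(x) > u0(x) for every x with 0 ≤ x < ζ, and u1(x) < u0(x) for every x > ζ. -/

import Mathlib

/-- Single-crossing property: under `w1·(a−b) > w0·a`, the confidential
marginal utility `u1` dominates `u0` on `[0, ζ)` and is dominated on
`(ζ, ∞)`. -/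
theorem single_crossing (a b w0 w1 lam : ℝ) (hb : 0 < b) (hba : b < a)
    (hw0 : 0 < w0) (hw1 : 0 < w1) (hlam : 0 < lam)
    (hcase : w0 * a < w1 * (a - b)) :
    let u0 : ℝ → ℝ := fun x => w0 / (2 * Real.log 2) * (a / (1 + a * x)) - lam
    let u1 : ℝ → ℝ := fun x =>
      w1 / (2 * Real.log 2) * (a / (1 + a * x) - b / (1 + b * x)) - lam
    let ζ : ℝ := (w1 / w0) * (1 / b - 1 / a) - 1 / b
    0 < ζ ∧ (∀ x : ℝ, 0 ≤ x → x < ζ → u0 x < u1 x) ∧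
      (∀ x : ℝ, ζ < x → u1 x < u0 x) := by
  intro u0 u1 ζ
  have ha : 0 < a := hb.trans hba
  have hlog : 0 < Real.log 2 := Real.log_pos (by norm_num)
  have hζeq : ζ = (w1 * (a - b) - w0 * a) / (w0 * a * b) := by
    show (w1 / w0) * (1 / b - 1 / a) - 1 / b = _
    field_simp
  have hζpos : 0 < ζ := by
    rw [hζeq]
    apply div_pos (by linarith) (by positivity)
  have key : ∀ x : ℝ, 0 < 1 + a * x → 0 < 1 + b * x →
      u1 x - u0 x = (w0 * a * b * (ζ - x)) /
        (2 * Real.log 2 * ((1 + a * x) * (1 + b * x))) := by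
    intro x h1 h2
    show (w1 / (2 * Real.log 2) * (a / (1 + a * x) - b / (1 + b * x)) - lam) -
      (w0 / (2 * Real.log 2) * (a / (1 + a * x)) - lam) = _
    rw [hζeq]
    have h1' : 1 + a * x ≠ 0 := h1.ne'
    have h2' : 1 + b * x ≠ 0 := h2.ne'
    rw [div_sub_div _ _ h1' h2', eq_div_iff (mul_pos (mul_pos two_pos hlog) (mul_pos h1 h2)).ne']
    field_simp
    ring
  refine ⟨hζpos, ?_, ?_⟩
  · intro x hx hxζ
    have h1 : 0 < 1 + a * x := by positivity
    have h2 : 0 < 1 + b * x := by positivity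
    have := key x h1 h2
    have hpos : 0 < (w0 * a * b * (ζ - x)) /
        (2 * Real.log 2 * ((1 + a * x) * (1 + b * x))) := by
      exact div_pos (mul_pos (mul_pos (mul_pos hw0 ha) hb) (by linarith)) (by positivity)
    exact sub_pos.mp (this.symm ▸ hpos)
  · intro x hxζ
    have hx : 0 < x := hζpos.trans hxζ
    have h1 : 0 < 1 + a * x := by positivity
    have h2 : 0 < 1 + b * x := by positivity
    have := key x h1 h2
    have hneg : (w0 * a * b * (ζ - x)) /
        (2 * Real.log 2 * ((1 + a * x) * (1 + b * x))) < 0 := by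
      exact div_neg_of_neg_of_pos (by nlinarith [mul_pos (mul_pos (mul_pos hw0 ha) hb) (sub_pos.mpr hxζ)]) (by positivity)
    exact sub_neg.mp (this.symm ▸ hneg)
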